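/- If 0 lies in the interior of U ⊆ ℝ^k, then the convex cone generated by {X₁(γ(t)),…,X_k(γ(t))} is contained in the set 𝒱¹_{Σ₂}(γ(t)) of first-order elementary perturbation vectors of a control-affine system at γ(t). -/

import Mathlib

/-- if 0 ∈ int U then cone(conv{X₁(γ(t)),…,X_k(γ(t))}) is contained
in the set 𝒱¹ of first-order elementary perturbation vectors
{Σ_c l₁(u₁^c − u^c(t₀)) X_c(γ(t₀)) : u₁ ∈ U, l₁ > 0}. -/
theorem stmt_3 {m k : ℕ}
    (X₀ : (Fin m → ℝ) → (Fin m → ℝ)) (Xc : Fin k → (Fin m → ℝ) → (Fin m → ℝ))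
    (U : Set (Fin k → ℝ)) (hUopen : IsOpen U)
    (h0 : (0 : Fin k → ℝ) ∈ interior U)
    (u : Fin k → ℝ) (hu : u ∈ U)
    (x : Fin m → ℝ)   -- the point γ(t₀)
    (V1 : Set (Fin m → ℝ))
    (hV1 : V1 = {v | ∃ u₁ ∈ U, ∃ l : ℝ, 0 < l ∧ v = ∑ c, (l * (u₁ c - u c)) • Xc c x}) :
    ∀ v : Fin m → ℝ,
      (∃ r : ℝ, 0 < r ∧ ∃ w ∈ convexHull ℝ (Set.range fun c => Xc c x), v = r • w) →
      v ∈ V1 := by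
  intro v ⟨r, hr, w, hw, hv⟩
  rw [convexHull_range_eq_exists_affineCombination] at hw
  obtain ⟨s, wt, hwt0, hwt1, hw⟩ := hw
  -- extend weights by zero
  set lam : Fin k → ℝ := fun c => if c ∈ s then wt c else 0 with hlam
  have hlam0 : ∀ c, 0 ≤ lam c := by
    intro c; simp only [hlam]
    split
    · exact hwt0 _ ‹_›
    · exact le_rfl
  have hlam1 : ∀ c, lam c ≤ 1 := by
    intro c
    rcases le_or_gt (lam c) 0 with h | h
    · linarith
    · have hc : c ∈ s := by
        by_contra hc; simp [hlam, hc] at h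
      calc lam c = wt c := by simp [hlam, hc]
        _ ≤ ∑ i ∈ s, wt i := Finset.single_le_sum (fun i hi => hwt0 i hi) hc
        _ = 1 := hwt1
  have hwsum : w = ∑ c, lam c • Xc c x := by
    rw [← hw, Finset.affineCombination_eq_linear_combination _ _ _ hwt1]
    rw [← Finset.sum_subset (Finset.subset_univ s)
      (fun c _ hc => by simp [hlam, hc] : ∀ c ∈ Finset.univ, c ∉ s → lam c • Xc c x = 0)]
    exact Finset.sum_congr rfl fun c hc => by simp [hlam, hc]
  -- choose ε with ball u ε ⊆ U
  obtain ⟨ε, hε, hball⟩ := Metric.isOpen_iff.1 hUopen u hu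
  refine hV1 ▸ ⟨u + (ε/2) • lam, ?_, 2*r/ε, by positivity, ?_⟩
  · apply hball
    rw [Metric.mem_ball, dist_eq_norm]
    have : u + (ε/2) • lam - u = (ε/2) • lam := by abel
    rw [this]
    have h1 : ‖(ε/2) • lam‖ ≤ ε/2 := by
      rw [norm_smul]
      have : ‖lam‖ ≤ 1 := by
        apply pi_norm_le_iff_of_nonneg zero_le_one |>.2
        intro c
        rw [Real.norm_eq_abs, abs_le]
        exact ⟨by linarith [hlam0 c], hlam1 c⟩
      calc ‖(ε/2 : ℝ)‖ * ‖lam‖ ≤ ‖(ε/2 : ℝ)‖ * 1 :=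
            mul_le_mul_of_nonneg_left this (norm_nonneg _)
        _ = ε/2 := by rw [mul_one, Real.norm_eq_abs, abs_of_pos (by linarith)]
    linarith
  · rw [hv, hwsum, Finset.smul_sum]
    apply Finset.sum_congr rfl
    intro c _
    rw [smul_smul]
    congr 1
    simp only [Pi.add_apply, Pi.smul_apply, smul_eq_mul]
    field_simp
    ring
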